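/- arXiv:1202.4408 — 4 statements merged into one kernel-verified Lean document; each statement's English description precedes it below -/
import Mathlib

section
/- Let A be a commutative complete Noetherian local ring with maximal ideal m and residue field k = A/m, let G be a group and d ≥ 1, and let ρ, ρ' : G → GL_d(A) be group homomorphisms with tr(ρ(g)) = tr(ρ'(g)) for all g ∈ G. If the reduction ρ̄ : G → GL_d(k) of ρ modulo m is absolutely irreducible, then ρ and ρ' are conjugate, i.e. there exists M ∈ GL_d(A) such that ρ'(g) = M ρ(g) M^{-1} for all g ∈ G. -/
set_option linter.unusedSectionVars false
set_option maxHeartbeats 1000000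

open IsLocalRing Matrix Submodule

section Aux

variable {A : Type*} [CommRing A] [IsLocalRing A] [IsNoetherianRing A] {d : ℕ}

lemma aux_mem_smul_top (X : Matrix (Fin d) (Fin d) A) (h : X.map (residue A) = 0) :
    X ∈ (maximalIdeal A) • (⊤ : Submodule A (Matrix (Fin d) (Fin d) A)) := by
  have hX : ∀ a b, X a b ∈ maximalIdeal A := by
    intro a b
    have := congrFun (congrFun h a) b
    simpa [Matrix.map_apply, Ideal.Quotient.eq_zero_iff_mem] using this
  rw [matrix_eq_sum_single X]
  refine Submodule.sum_mem _ fun a _ => Submodule.sum_mem _ fun b _ => ?_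
  have : Matrix.single a b (X a b) = (X a b) • Matrix.single a b (1 : A) := by
    rw [smul_single, smul_eq_mul, mul_one]
  rw [this]
  exact Submodule.smul_mem_smul (hX a b) trivial

lemma aux_span_top (v : Fin d × Fin d → Matrix (Fin d) (Fin d) A)
    (h : span (ResidueField A) (Set.range fun i => (v i).map (residue A)) = ⊤) :
    span A (Set.range v) = ⊤ := by
  have hfg : (⊤ : Submodule A (Matrix (Fin d) (Fin d) A)).FG := Module.finite_def.mp inferInstance
  have hjac : maximalIdeal A ≤ Ideal.jacobson ⊥ := by
    rw [IsLocalRing.jacobson_eq_maximalIdeal (⊥ : Ideal A) bot_ne_top]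
  have key : (⊤ : Submodule A (Matrix (Fin d) (Fin d) A)) ≤
      span A (Set.range v) ⊔ (maximalIdeal A) • ⊤ := by
    intro x _
    have hx : x.map (residue A) ∈ span (ResidueField A)
        (Set.range fun i => (v i).map (residue A)) := h ▸ trivial
    rw [mem_span_range_iff_exists_fun] at hx
    obtain ⟨c, hc⟩ := hx
    choose a ha using fun i => residue_surjective (R := A) (c i)
    set y := ∑ i, a i • v i with hy
    have hymem : y ∈ span A (Set.range v) :=
      Submodule.sum_mem _ fun i _ => Submodule.smul_mem _ _ (subset_span ⟨i, rfl⟩)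
    have hres : (x - y).map (residue A) = 0 := by
      have : y.map (residue A) = ∑ i, c i • (v i).map (residue A) := by
        ext p q
        simp [hy, Matrix.map_apply, Matrix.sum_apply, Matrix.smul_apply, ← ha, smul_eq_mul]
      have hsub : (x - y).map (residue A) = x.map (residue A) - y.map (residue A) := by
        ext p q; simp [Matrix.map_apply]
      rw [hsub, this, hc, sub_self]
    have : x = y + (x - y) := by abel
    rw [this]
    exact Submodule.add_mem _ (Submodule.mem_sup_left hymem)
      (Submodule.mem_sup_right (aux_mem_smul_top _ hres))
  exact top_le_iff.mp (Submodule.le_of_le_smul_of_le_jacobson_bot hfg hjac key)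

lemma aux_basis (v : Fin d × Fin d → Matrix (Fin d) (Fin d) A)
    (h : span (ResidueField A) (Set.range fun i => (v i).map (residue A)) = ⊤) :
    ∃ b : Module.Basis (Fin d × Fin d) A (Matrix (Fin d) (Fin d) A), ⇑b = v := by
  have hspan := aux_span_top v h
  set L := (Fintype.linearCombination A v : (Fin d × Fin d → A) →ₗ[A] _) with hL
  have hsurj : Function.Surjective L := by
    rw [← LinearMap.range_eq_top, hL, Fintype.range_linearCombination, hspan]
  set e := (Matrix.stdBasis A (Fin d) (Fin d)).equivFun with he
  have hendo : Function.Surjective (e.toLinearMap ∘ₗ L) := e.surjective.comp hsurj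
  have hinj : Function.Injective (e.toLinearMap ∘ₗ L) :=
    OrzechProperty.injective_of_surjective_endomorphism _ hendo
  have hLinj : Function.Injective L := by
    intro x y hxy
    exact hinj (by simp [LinearMap.comp_apply, hxy])
  have hli : LinearIndependent A v := by
    rw [Fintype.linearIndependent_iff]
    intro c hc i
    have : L c = L 0 := by
      simp [hL, Fintype.linearCombination_apply, hc]
    exact congrFun (hLinj this) i
  exact ⟨Module.Basis.mk hli (by rw [hspan]), Module.Basis.coe_mk _ _⟩

end Aux

lemma aux_trace_std {R : Type*} [CommRing R] {d : ℕ} (X : Matrix (Fin d) (Fin d) R) (i j : Fin d) :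
    trace (X * Matrix.single i j (1 : R)) = X j i := by
  simp [Matrix.trace, Matrix.diag, Matrix.mul_apply, Matrix.single, Finset.sum_comm, ite_and]

lemma aux_eq_zero_of_trace {K : Type*} [Field K] {d : ℕ} {ι : Type*}
    (v : ι → Matrix (Fin d) (Fin d) K)
    (hspan : Submodule.span K (Set.range v) = ⊤)
    (X : Matrix (Fin d) (Fin d) K) (h : ∀ i, trace (X * v i) = 0) : X = 0 := by
  have hall : ∀ Y, trace (X * Y) = 0 := by
    intro Y
    have hY : Y ∈ Submodule.span K (Set.range v) := hspan ▸ trivial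
    induction hY using Submodule.span_induction with
    | mem y hy => obtain ⟨i, rfl⟩ := hy; exact h i
    | zero => simp
    | add y z _ _ hy hz => rw [mul_add, trace_add, hy, hz, add_zero]
    | smul c y _ hy => rw [mul_smul_comm, trace_smul, hy, smul_zero]
  ext a b
  have := hall (Matrix.single b a 1)
  rwa [aux_trace_std] at this

lemma aux_gram_unit {K : Type*} [Field K] {d : ℕ}
    (bv : Module.Basis (Fin d × Fin d) K (Matrix (Fin d) (Fin d) K)) :
    (Matrix.of fun i j => trace (bv i * bv j)).det ≠ 0 := by
  set T := (Matrix.of fun i j => trace (bv i * bv j)) with hT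
  intro hdet
  have : T.transpose.det = 0 := by rw [Matrix.det_transpose]; exact hdet
  obtain ⟨c, hc0, hc⟩ := Matrix.exists_mulVec_eq_zero_iff.mpr this
  have hzero : (∑ i, c i • bv i) = 0 := by
    refine aux_eq_zero_of_trace bv bv.span_eq _ (fun j => ?_)
    have := congrFun hc j
    simp only [Matrix.mulVec, dotProduct, Matrix.transpose_apply, hT, Matrix.of_apply,
      Pi.zero_apply] at this
    calc trace ((∑ i, c i • bv i) * bv j) = ∑ i, c i * trace (bv i * bv j) := by
          rw [Finset.sum_mul, trace_sum]
          exact Finset.sum_congr rfl fun i _ => by rw [smul_mul_assoc, trace_smul, smul_eq_mul]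
      _ = 0 := by rw [Finset.sum_congr rfl fun i _ => mul_comm (c i) _]; exact this
  have : ∀ i, c i = 0 := by
    have hli := bv.linearIndependent
    rw [Fintype.linearIndependent_iff] at hli
    exact hli c hzero
  exact hc0 (funext this)

lemma aux_extract {K V G' : Type*} [Field K] [AddCommGroup V] [Module K V] [FiniteDimensional K V]
    {ι : Type*} [Fintype ι] (f : G' → V) (hspan : span K (Set.range f) = ⊤)
    (hcard : Fintype.card ι = Module.finrank K V) :
    ∃ g : ι → G', ∃ b : Module.Basis ι K V, ∀ i, b i = f (g i) := by
  obtain ⟨t, hts, hspan', hli⟩ := exists_linearIndependent K (Set.range f)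
  haveI : Finite t := hli.finite
  haveI : Fintype t := Fintype.ofFinite t
  have hsp : ⊤ ≤ span K (Set.range ((↑) : t → V)) := by
    rw [Subtype.range_coe, hspan', hspan]
  let b0 : Module.Basis t K V := Module.Basis.mk hli hsp
  have hcard' : Fintype.card ι = Fintype.card t := by
    rw [hcard, Module.finrank_eq_card_basis b0]
  let e : ι ≃ t := Fintype.equivOfCardEq hcard'
  have hmem : ∀ i : ι, (e i : V) ∈ Set.range f := fun i => hts (e i).2
  choose g hg using hmem
  refine ⟨g, b0.reindex e.symm, fun i => ?_⟩
  rw [Module.Basis.reindex_apply, Equiv.symm_symm, Module.Basis.coe_mk, hg i]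

/-- Two representations of a group over a complete Noetherian local ring with the same trace,
one of which has absolutely irreducible residual reduction, are conjugate. -/
theorem representations_with_equal_trace_are_conjugate_of_residually_absolutely_irreducible
    (A : Type*) [CommRing A] [IsLocalRing A] [IsNoetherianRing A]
    [IsAdicComplete (IsLocalRing.maximalIdeal A) A]
    (G : Type*) [Group G] (d : ℕ) (hd : 1 ≤ d)
    (ρ ρ' : G →* Matrix.GeneralLinearGroup (Fin d) A)
    (htr : ∀ g : G, Matrix.trace (ρ g : Matrix (Fin d) (Fin d) A) =
      Matrix.trace (ρ' g : Matrix (Fin d) (Fin d) A))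
    (habs : Algebra.adjoin (IsLocalRing.ResidueField A)
      (Set.range fun g : G =>
        (ρ g : Matrix (Fin d) (Fin d) A).map (IsLocalRing.residue A)) = ⊤) :
    ∃ M : Matrix.GeneralLinearGroup (Fin d) A, ∀ g : G, ρ' g = M * ρ g * M⁻¹ := by
  classical
  set k := ResidueField A
  set π := residue A with hπ
  set r : G → Matrix (Fin d) (Fin d) A := fun g => (ρ g : Matrix (Fin d) (Fin d) A) with hr
  set r' : G → Matrix (Fin d) (Fin d) A := fun g => (ρ' g : Matrix (Fin d) (Fin d) A) with hr'
  have hrmul : ∀ g h : G, r (g * h) = r g * r h := fun g h => by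
    simp [hr, _root_.map_mul, Units.val_mul]
  have hrmul' : ∀ g h : G, r' (g * h) = r' g * r' h := fun g h => by
    simp [hr', _root_.map_mul, Units.val_mul]
  -- trace commutes with reduction
  have htrmap : ∀ X : Matrix (Fin d) (Fin d) A, trace (X.map π) = π (trace X) := by
    intro X
    simp [Matrix.trace, Matrix.map_apply, Matrix.diag, map_sum]
  -- Step 1: span of residual image is everything
  have hspan0 : span k (Set.range fun g : G => (r g).map π) = ⊤ := by
    have hψ : ∀ g h : G, ((r (g * h)).map π) = (r g).map π * (r h).map π := by
      intro g h; rw [hrmul, Matrix.map_mul]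
    let ψ : G →* Matrix (Fin d) (Fin d) k :=
      { toFun := fun g => (r g).map π
        map_one' := by
          have : r 1 = 1 := by simp [hr, _root_.map_one, Units.val_one]
          simp [this]
        map_mul' := hψ }
    have hclos : (Submonoid.closure (Set.range fun g : G => (r g).map π) : Set _) =
        Set.range fun g : G => (r g).map π := by
      have : (Set.range fun g : G => (r g).map π) = (MonoidHom.mrange ψ : Set _) := by
        ext x; simp [ψ, MonoidHom.mem_mrange, eq_comm]
      rw [this, Submonoid.closure_eq]
    have h2 := Algebra.adjoin_eq_span k (Set.range fun g : G => (r g).map π)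
    rw [habs] at h2
    rw [← hclos, ← h2]
    exact Algebra.top_toSubmodule
  -- Step 2: extract residual basis
  have hcard : Fintype.card (Fin d × Fin d) = Module.finrank k (Matrix (Fin d) (Fin d) k) := by
    simp [Module.finrank_matrix]
  obtain ⟨gi, bk, hbk⟩ := aux_extract (fun g : G => (r g).map π) hspan0 hcard
  -- Step 3: basis over A lifting it
  set v : Fin d × Fin d → Matrix (Fin d) (Fin d) A := fun i => r (gi i) with hv
  obtain ⟨bA, hbA⟩ := aux_basis v (by
    have : (fun i => (v i).map π) = ⇑bk := funext fun i => (hbk i).symm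
    rw [this, bk.span_eq])
  -- Step 4: the Gram matrix and its invertibility
  set T : Matrix (Fin d × Fin d) (Fin d × Fin d) A :=
    Matrix.of fun i j => trace (v i * v j) with hT
  have hTmap : T.map π = Matrix.of fun i j => trace (bk i * bk j) := by
    ext i j
    simp only [Matrix.map_apply, hT, Matrix.of_apply]
    rw [← htrmap, Matrix.map_mul, ← hbk, ← hbk]
  have hTdet : IsUnit T.det := by
    rw [← residue_ne_zero_iff_isUnit]
    show π T.det ≠ 0
    have hdet2 : π T.det = (T.map π).det := by
      rw [RingHom.map_det]; rfl
    rw [hdet2, hTmap]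
    exact aux_gram_unit bk
  haveI hTinv : Invertible T := T.invertibleOfIsUnitDet hTdet
  -- Step 5: the second family is also a basis
  set w : Fin d × Fin d → Matrix (Fin d) (Fin d) A := fun i => r' (gi i) with hw
  have hGram' : ∀ i j, trace (w i * w j) = T i j := by
    intro i j
    simp only [hw, hT, Matrix.of_apply, hv]
    rw [← hrmul', ← hrmul, ← htr]
  have hGrambar : ∀ i j, trace ((w i).map π * (w j).map π) = trace (bk i * bk j) := by
    intro i j
    rw [hbk i, hbk j, ← Matrix.map_mul, ← Matrix.map_mul, htrmap, htrmap, hGram']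
    rfl
  have hliw : LinearIndependent k (fun i => (w i).map π) := by
    rw [Fintype.linearIndependent_iff]
    intro c hc
    by_contra hne
    push_neg at hne
    obtain ⟨i0, hi0⟩ := hne
    have hdet0 : (Matrix.of fun i j => trace (bk i * bk j)).det = 0 := by
      refine Matrix.exists_mulVec_eq_zero_iff.mp ⟨c, fun h => hi0 (congrFun h i0), ?_⟩
      ext j
      simp only [Matrix.mulVec, dotProduct, Matrix.of_apply, Pi.zero_apply]
      calc ∑ x, trace (bk j * bk x) * c x
          = ∑ x, c x * trace ((w x).map π * (w j).map π) := by
            refine Finset.sum_congr rfl fun x _ => ?_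
            rw [trace_mul_comm (bk j) (bk x), ← hGrambar x j, mul_comm]
        _ = trace ((∑ x, c x • (w x).map π) * (w j).map π) := by
            rw [Finset.sum_mul, trace_sum]
            exact (Finset.sum_congr rfl fun x _ => by
              rw [smul_mul_assoc, trace_smul, smul_eq_mul]).symm
        _ = 0 := by rw [hc]; simp
    exact aux_gram_unit bk hdet0
  haveI : Nonempty (Fin d × Fin d) := ⟨(⟨0, hd⟩, ⟨0, hd⟩)⟩
  let bkw := basisOfLinearIndependentOfCardEqFinrank hliw hcard
  have hbkw : ⇑bkw = fun i => (w i).map π :=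
    coe_basisOfLinearIndependentOfCardEqFinrank _ _
  obtain ⟨bA', hbA'⟩ := aux_basis w (by rw [show (fun i => (w i).map π) = ⇑bkw from hbkw.symm, bkw.span_eq])
  set f := bA.equiv bA' (Equiv.refl _) with hfdef
  have hfv : ∀ i, f (v i) = w i := by
    intro i
    rw [← congrFun hbA i, hfdef, Module.Basis.equiv_apply, Equiv.refl_apply, congrFun hbA' i]
  have hexp : ∀ x : Matrix (Fin d) (Fin d) A, x = ∑ i, bA.repr x i • v i := by
    intro x
    conv_lhs => rw [← bA.sum_repr x]
    exact Finset.sum_congr rfl fun i _ => by rw [congrFun hbA i]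
  -- Step 7: f maps r to r'
  have key : ∀ g : G, f (r g) = r' g := by
    intro g
    set c : Fin d × Fin d → A := fun i => bA.repr (r g) i with hcdef
    set c' : Fin d × Fin d → A := fun i => bA'.repr (r' g) i with hc'def
    have hcsum : r g = ∑ i, c i • v i := hexp (r g)
    have hcsum' : r' g = ∑ i, c' i • w i := by
      conv_lhs => rw [← bA'.sum_repr (r' g)]
      exact Finset.sum_congr rfl fun i _ => by rw [congrFun hbA' i]
    have hgen : ∀ (u : Matrix (Fin d) (Fin d) A) (cc : Fin d × Fin d → A)
        (vv : Fin d × Fin d → Matrix (Fin d) (Fin d) A), u = ∑ i, cc i • vv i →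
        ∀ j, trace (u * vv j) = ∑ i, cc i * trace (vv i * vv j) := by
      intro u cc vv hu j
      rw [hu, Finset.sum_mul, trace_sum]
      exact Finset.sum_congr rfl fun i _ => by rw [smul_mul_assoc, trace_smul, smul_eq_mul]
    have h3 : ∀ j, trace (r g * v j) = trace (r' g * w j) := by
      intro j
      show trace (r g * r (gi j)) = trace (r' g * r' (gi j))
      rw [← hrmul, ← hrmul']
      exact htr _
    have hTc : c ᵥ* T = c' ᵥ* T := by
      ext j
      show ∑ i, c i * T i j = ∑ i, c' i * T i j
      have e1 : ∑ i, c i * T i j = trace (r g * v j) := by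
        rw [hgen (r g) c v hcsum j]
        rfl
      have e2 : ∑ i, c' i * T i j = trace (r' g * w j) := by
        rw [hgen (r' g) c' w hcsum' j]
        exact Finset.sum_congr rfl fun i _ => by rw [hGram']
      rw [e1, e2, h3]
    have hcc : c = c' := by
      have h4 := congrArg (fun u => u ᵥ* (⅟T)) hTc
      simpa only [Matrix.vecMul_vecMul, mul_invOf_self, Matrix.vecMul_one] using h4
    calc f (r g) = ∑ i, c i • w i := by
          rw [hcsum, map_sum]
          exact Finset.sum_congr rfl fun i _ => by rw [_root_.map_smul, hfv]
      _ = r' g := by rw [hcc, ← hcsum']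
  -- Step 8: f is multiplicative
  have hvw : ∀ i j, f (v i * v j) = w i * w j := by
    intro i j
    have h5 : v i * v j = r (gi i * gi j) := (hrmul _ _).symm
    rw [h5, key, hrmul']
  have hfmul : ∀ x y, f (x * y) = f x * f y := by
    intro x y
    obtain ⟨cx, hx⟩ : ∃ c : Fin d × Fin d → A, x = ∑ i, c i • v i :=
      ⟨fun i => bA.repr x i, hexp x⟩
    obtain ⟨cy, hy⟩ : ∃ c : Fin d × Fin d → A, y = ∑ i, c i • v i :=
      ⟨fun i => bA.repr y i, hexp y⟩
    have hterm : ∀ i j, f ((cx i • v i) * (cy j • v j)) = (cx i • w i) * (cy j • w j) := by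
      intro i j
      rw [smul_mul_assoc, mul_smul_comm, _root_.map_smul, _root_.map_smul, hvw,
        smul_mul_assoc, mul_smul_comm]
    have hfx : f (∑ i, cx i • v i) = ∑ i, cx i • w i := by
      rw [map_sum]; exact Finset.sum_congr rfl fun i _ => by rw [_root_.map_smul, hfv]
    have hfy : f (∑ i, cy i • v i) = ∑ i, cy i • w i := by
      rw [map_sum]; exact Finset.sum_congr rfl fun i _ => by rw [_root_.map_smul, hfv]
    rw [hx, hy, hfx, hfy, Finset.sum_mul_sum, Finset.sum_mul_sum, map_sum]
    refine Finset.sum_congr rfl fun i _ => ?_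
    rw [map_sum]
    exact Finset.sum_congr rfl fun j _ => hterm i j
  -- Step 9: images of standard basis matrices
  set o : Fin d := ⟨0, hd⟩ with ho
  set E : Fin d → Fin d → Matrix (Fin d) (Fin d) A := fun a b => Matrix.single a b 1 with hE
  set fE : Fin d → Fin d → Matrix (Fin d) (Fin d) A := fun a b => f (E a b) with hfE
  have hfEmul : ∀ a b c e : Fin d, fE a b * fE c e = if b = c then fE a e else 0 := by
    intro a b c e
    simp only [hfE]
    rw [← hfmul]
    by_cases hbc : b = c
    · subst hbc
      rw [if_pos rfl, hE]
      simp only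
      rw [Matrix.single_mul_single_same, one_mul]
    · rw [if_neg hbc, hE]
      simp only
      rw [Matrix.single_mul_single_of_ne (h := hbc), map_zero]
  -- Step 10: the reduction of fE o o is nonzero
  set ebar : Matrix (Fin d) (Fin d) (ResidueField A) := (fE o o).map π with hebar
  have hebar_ne : ebar ≠ 0 := by
    intro h0
    have hmem : ∀ a b, (fE o o) a b ∈ maximalIdeal A := by
      intro a b
      have h8 : π ((fE o o) a b) = 0 := by
        simpa [hebar, Matrix.map_apply] using congrFun (congrFun h0 a) b
      exact Ideal.Quotient.eq_zero_iff_mem.mp h8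
    have hEoo : E o o = f.symm (fE o o) := by
      simp only [hfE]
      rw [LinearEquiv.symm_apply_apply]
    have hsum : f.symm (fE o o) = ∑ a, ∑ b, ((fE o o) a b) • f.symm (E a b) := by
      conv_lhs => rw [matrix_eq_sum_single (fE o o)]
      rw [map_sum]
      refine Finset.sum_congr rfl fun a _ => ?_
      rw [map_sum]
      refine Finset.sum_congr rfl fun b _ => ?_
      rw [show Matrix.single a b ((fE o o) a b) = ((fE o o) a b) • E a b from by
        rw [hE]; simp only; rw [smul_single, smul_eq_mul, mul_one], _root_.map_smul]
    have h1mem : (1 : A) ∈ maximalIdeal A := by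
      have hentry := congrFun (congrFun (hEoo.trans hsum) o) o
      have hL : E o o o o = (1 : A) := by rw [hE]; simp [Matrix.single]
      rw [hL] at hentry
      rw [hentry]
      rw [Matrix.sum_apply]
      refine Ideal.sum_mem _ fun a _ => ?_
      rw [Matrix.sum_apply]
      refine Ideal.sum_mem _ fun b _ => ?_
      rw [Matrix.smul_apply, smul_eq_mul]
      exact Ideal.mul_mem_right _ _ (hmem a b)
    exact (IsLocalRing.maximalIdeal.isMaximal A).ne_top
      (Ideal.eq_top_of_isUnit_mem _ h1mem isUnit_one)
  -- Step 11: an eigenvector for the idempotent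
  obtain ⟨a0, b0, hab0⟩ : ∃ a0 b0, ebar a0 b0 ≠ 0 := by
    by_contra hno
    push_neg at hno
    exact hebar_ne (by ext a b; exact hno a b)
  set v1 : Fin d → ResidueField A := ebar *ᵥ (Pi.single b0 1) with hv1
  have hv1ne : v1 ≠ 0 := by
    intro h0
    have := congrFun h0 a0
    rw [hv1, Matrix.mulVec_single] at this
    simp only [mul_one, Pi.zero_apply, MulOpposite.op_one, one_smul] at this
    exact hab0 this
  have hee : fE o o * fE o o = fE o o := by rw [hfEmul]; simp
  have hv1fix : ebar *ᵥ v1 = v1 := by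
    rw [hv1, Matrix.mulVec_mulVec, hebar, ← Matrix.map_mul, hee]
  -- Step 12: a basis of k^d
  set vv : Fin d → (Fin d → ResidueField A) := fun i => ((fE i o).map π) *ᵥ v1 with hvv
  have hsingle : ∀ j i, ((fE o j).map π) *ᵥ vv i = if i = j then v1 else 0 := by
    intro j i
    rw [hvv]
    simp only
    rw [Matrix.mulVec_mulVec, ← Matrix.map_mul, hfEmul]
    by_cases hij : j = i
    · subst hij
      rw [if_pos rfl, if_pos rfl]
      exact hv1fix
    · rw [if_neg hij, if_neg (fun h => hij h.symm)]
      simp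
  have hlivv : LinearIndependent (ResidueField A) vv := by
    rw [Fintype.linearIndependent_iff]
    intro c hc j
    have h6 := congrArg (fun u => ((fE o j).map π) *ᵥ u) hc
    rw [Matrix.mulVec_zero] at h6  -- RHS
    have h7 : ((fE o j).map π) *ᵥ (∑ i, c i • vv i) = c j • v1 := by
      have h9 : ((fE o j).map π) *ᵥ (∑ i, c i • vv i)
          = ∑ i, c i • (((fE o j).map π) *ᵥ vv i) := by
        have h10 := map_sum ((fE o j).map π).mulVecLin (fun i => c i • vv i) Finset.univ
        simp only [_root_.map_smul, Matrix.mulVecLin_apply] at h10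
        exact h10
      rw [h9]
      rw [Finset.sum_congr rfl fun i _ => by rw [hsingle j i]]
      simp [Finset.sum_ite_eq', smul_ite]
    rw [h7] at h6
    rcases smul_eq_zero.mp h6 with h | h
    · exact h
    · exact absurd h hv1ne
  haveI : Nonempty (Fin d) := ⟨o⟩
  have hcard2 : Fintype.card (Fin d) = Module.finrank (ResidueField A) (Fin d → ResidueField A) := by
    simp
  set bvv := basisOfLinearIndependentOfCardEqFinrank hlivv hcard2 with hbvvdef
  have hbvv : ⇑bvv = vv := coe_basisOfLinearIndependentOfCardEqFinrank _ _
  -- Step 13: the intertwining matrix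
  set C : Matrix (Fin d) (Fin d) A :=
    Matrix.of fun a _ => Function.surjInv residue_surjective (v1 a) with hCdef
  have hC : C.map π = Matrix.of fun a _ => v1 a := by
    ext a b
    exact Function.surjInv_eq residue_surjective (v1 a)
  set Mmat : Matrix (Fin d) (Fin d) A := ∑ i, fE i o * C * E o i with hMdef
  -- Step 14: intertwining on standard matrices
  have hint_std : ∀ a b, fE a b * Mmat = Mmat * E a b := by
    intro a b
    rw [hMdef, Finset.mul_sum, Finset.sum_mul]
    have hL : ∀ i, fE a b * (fE i o * C * E o i)
        = if b = i then fE a o * C * E o i else 0 := by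
      intro i
      rw [show fE a b * (fE i o * C * E o i) = (fE a b * fE i o) * (C * E o i) from by
        rw [mul_assoc, mul_assoc], hfEmul]
      by_cases hbi : b = i
      · rw [if_pos hbi, if_pos hbi, mul_assoc]
      · rw [if_neg hbi, if_neg hbi, zero_mul]
    have hR : ∀ i, fE i o * C * E o i * E a b
        = if i = a then fE i o * C * E o b else 0 := by
      intro i
      rw [mul_assoc (fE i o * C)]
      by_cases hia : i = a
      · subst hia
        rw [if_pos rfl, hE]
        simp only
        rw [Matrix.single_mul_single_same, one_mul]
      · rw [if_neg hia, hE]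
        simp only
        rw [Matrix.single_mul_single_of_ne (h := hia), mul_zero]
    rw [Finset.sum_congr rfl fun i _ => hL i, Finset.sum_congr rfl fun i _ => hR i]
    simp only [Finset.sum_ite_eq, Finset.sum_ite_eq', Finset.mem_univ, if_true]
  -- Step 15: intertwining everywhere
  have hint : ∀ x : Matrix (Fin d) (Fin d) A, f x * Mmat = Mmat * x := by
    intro x
    have hxsum : x = ∑ a, ∑ b, (x a b) • E a b := by
      conv_lhs => rw [matrix_eq_sum_single x]
      refine Finset.sum_congr rfl fun a _ => Finset.sum_congr rfl fun b _ => ?_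
      rw [hE]; simp only; rw [smul_single, smul_eq_mul, mul_one]
    conv_lhs => rw [hxsum]
    conv_rhs => rw [hxsum]
    rw [map_sum, Finset.sum_mul, Finset.mul_sum]
    refine Finset.sum_congr rfl fun a _ => ?_
    rw [map_sum, Finset.sum_mul, Finset.mul_sum]
    refine Finset.sum_congr rfl fun b _ => ?_
    rw [_root_.map_smul, smul_mul_assoc, mul_smul_comm, hint_std]
  -- Step 16: reduction of Mmat has the vv as columns
  have hMmap : Mmat.map π = Matrix.of fun a b => vv b a := by
    ext a b
    have hterm : ∀ i, (fE i o * C * E o i) a b = if b = i then (fE i o * C) a o else 0 := by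
      intro i
      rw [Matrix.mul_apply, hE]
      simp only
      simp [Matrix.single, mul_ite, mul_one, mul_zero, ite_and, Finset.sum_ite_eq,
        Finset.sum_ite_eq', eq_comm]
    have h11 : Mmat a b = (fE b o * C) a o := by
      rw [hMdef, Matrix.sum_apply, Finset.sum_congr rfl fun i _ => hterm i]
      simp only [Finset.sum_ite_eq, Finset.mem_univ, if_true]
    rw [Matrix.map_apply, h11, Matrix.mul_apply, map_sum]
    show _ = vv b a
    rw [hvv]
    simp only
    rw [Matrix.mulVec, dotProduct]
    refine Finset.sum_congr rfl fun c _ => ?_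
    rw [_root_.map_mul]
    congr 1
    exact congrFun (congrFun hC c) o
  -- Step 17: Mmat is invertible
  have hMdet : IsUnit Mmat.det := by
    rw [← residue_ne_zero_iff_isUnit]
    show π Mmat.det ≠ 0
    have hh : π Mmat.det = (Mmat.map π).det := by rw [RingHom.map_det]; rfl
    rw [hh, hMmap]
    have hmatrix : (Matrix.of fun a b => vv b a)
        = (Pi.basisFun (ResidueField A) (Fin d)).toMatrix ⇑bvv := by
      ext a b
      rw [Module.Basis.toMatrix_apply, hbvv]
      simp
    rw [hmatrix]
    haveI := (Pi.basisFun (ResidueField A) (Fin d)).invertibleToMatrix bvv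
    exact isUnit_iff_ne_zero.mp
      (Matrix.isUnit_iff_isUnit_det _ |>.mp (isUnit_of_invertible _))
  -- Step 18: conclusion
  have hMunit : IsUnit Mmat := (Matrix.isUnit_iff_isUnit_det Mmat).mpr hMdet
  refine ⟨hMunit.unit, fun g => ?_⟩
  have hcomm : ρ' g * hMunit.unit = hMunit.unit * ρ g := by
    refine Units.ext ?_
    rw [Units.val_mul, Units.val_mul, IsUnit.unit_spec]
    show r' g * Mmat = Mmat * r g
    rw [← key g]
    exact hint (r g)
  rw [eq_mul_inv_iff_mul_eq]
  exact hcomm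
end

section
/- Let X be a Noetherian scheme, H a group, d ≥ 1, and let ρ : H → GL_d(Γ(X, O_X)) be a group homomorphism into the invertible d×d matrices over the ring of global sections of X. For each point x ∈ X, let ρ_x : H → GL_d(κ(x)) be the homomorphism obtained by applying the canonical ring homomorphism Γ(X, O_X) → κ(x) to the residue field of x entrywise, and set r(x) = dim_{κ(x)} { v ∈ κ(x)^d : ρ_x(h)·v = v for all h ∈ H }, the dimension of the space of H-invariants in the fiber. Then the function r : X → ℕ is upper semicontinuous. -/
open AlgebraicGeometry CategoryTheory

/-- The subspace of simultaneous fixed vectors of a family of matrices acting on `Fin d → K`. -/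
def fixedVectors {K : Type*} [Field K] {d : ℕ} {H : Type*}
    (M : H → Matrix (Fin d) (Fin d) K) : Submodule K (Fin d → K) where
  carrier := {v | ∀ h : H, (M h).mulVec v = v}
  add_mem' := by
    intro v w hv hw h
    rw [Matrix.mulVec_add, hv h, hw h]
  zero_mem' := by
    intro h
    rw [Matrix.mulVec_zero]
  smul_mem' := by
    intro c v hv h
    rw [Matrix.mulVec_smul, hv h]

section LinearAlgebraAux

open Module Submodule Matrix

variable {K : Type*} [Field K] {ι ι' : Type*} {n : Type*} [Fintype n] [DecidableEq n]


/-- Selecting rows of a matrix does not increase the rank. -/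
lemma rank_submatrix_rows_le (M : Matrix ι n K) (r : ι' → ι) :
    (M.submatrix r id).rank ≤ M.rank := by
  have h : (M.submatrix r id).mulVecLin = (LinearMap.funLeft K K r).comp M.mulVecLin := by
    apply LinearMap.ext
    intro v
    funext i
    simp [Matrix.mulVecLin_apply, Matrix.mulVec, dotProduct, LinearMap.funLeft]
  rw [Matrix.rank, h, LinearMap.range_comp]
  exact Submodule.finrank_map_le _ _

/-- If some `k × k` submatrix has nonzero determinant, the rank is at least `k`. -/
lemma le_rank_of_det_submatrix_ne_zero {k : ℕ} (M : Matrix ι n K) (r : Fin k → ι)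
    (c : Fin k → n) (h : (M.submatrix r c).det ≠ 0) : k ≤ M.rank := by
  have h1 : (M.submatrix r c).rank = k := by
    rw [Matrix.rank_of_isUnit _ (Matrix.isUnit_iff_isUnit_det _ |>.mpr (isUnit_iff_ne_zero.mpr h))]
    simp
  have h2 : (M.submatrix r c) = ((M.submatrix r id)ᵀ.submatrix c id)ᵀ := by
    ext i j; simp
  have h3 : (M.submatrix r c).rank ≤ (M.submatrix r id).rank := by
    rw [h2, Matrix.rank_transpose]
    calc ((M.submatrix r id)ᵀ.submatrix c id).rank ≤ (M.submatrix r id)ᵀ.rank :=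
          rank_submatrix_rows_le _ _
      _ = (M.submatrix r id).rank := Matrix.rank_transpose _
  rw [← h1]
  exact h3.trans (rank_submatrix_rows_le M r)

/-- If the columns of a (possibly infinitely tall) matrix are linearly independent, then
some square row-selection has nonzero determinant. -/
lemma exists_rows_det_ne_zero {k : ℕ} (N : Matrix ι (Fin k) K)
    (hN : Function.Injective N.mulVec) :
    ∃ r : Fin k → ι, (N.submatrix r id).det ≠ 0 := by
  classical
  -- the rows of `N` span `Fin k → K`
  have hW : span K (Set.range fun i : ι => N i) = ⊤ := by
    by_contra hW
    obtain ⟨φ, hφ, hker⟩ := Submodule.exists_dual_map_eq_bot_of_lt_top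
      (lt_top_iff_ne_top.mpr hW) inferInstance
    have hle : ∀ w ∈ span K (Set.range fun i : ι => N i), φ w = 0 := by
      intro w hw
      have : φ w ∈ (span K (Set.range fun i : ι => N i)).map φ := Submodule.mem_map_of_mem hw
      rwa [hker, Submodule.mem_bot] at this
    set x : Fin k → K := fun j => φ (Pi.single j 1) with hx
    have hsingle : ∀ f : Fin k → K, φ f = ∑ j, f j * x j := by
      intro f
      have hsum : f = ∑ j, f j • (Pi.single j (1 : K) : Fin k → K) := by
        funext j'
        simp [Pi.single_apply, Finset.sum_apply]
      calc φ f = φ (∑ j, f j • (Pi.single j (1 : K) : Fin k → K)) := by rw [← hsum]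
        _ = ∑ j, f j * x j := by
            rw [map_sum]
            simp [smul_eq_mul]
            rfl
    have hx0 : N.mulVec x = 0 := by
      funext i
      have hNi : φ (N i) = 0 := hle _ (Submodule.subset_span ⟨i, rfl⟩)
      have h1 : (N.mulVec x) i = ∑ j, N i j * x j := rfl
      rw [h1, ← hsingle (N i), hNi]
      rfl
    have hx00 : x = 0 := hN (by rw [hx0, Matrix.mulVec_zero])
    apply hφ
    apply LinearMap.ext
    intro f
    rw [hsingle f, hx00]
    simp
  obtain ⟨t, hts, hspan, hli⟩ := exists_linearIndependent K (Set.range fun i : ι => N i)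
  rw [hW] at hspan
  have htfin : t.Finite := hli.setFinite
  haveI := htfin.fintype
  have hcard : t.toFinset.card = k := by
    have h1 := finrank_span_set_eq_card hli
    rw [hspan, finrank_top, Module.finrank_fin_fun] at h1
    omega
  have e := t.toFinset.equivFinOfCardEq hcard
  have hmem : ∀ i : Fin k, ((e.symm i : Fin k → K)) ∈ Set.range fun i : ι => N i := by
    intro i
    exact hts (Set.mem_toFinset.mp (e.symm i).2)
  choose r hr using hmem
  refine ⟨r, ?_⟩
  have hrows : LinearIndependent K fun i : Fin k => ((e.symm i : Fin k → K)) := by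
    apply hli.comp (fun i => ⟨(e.symm i : Fin k → K), Set.mem_toFinset.mp (e.symm i).2⟩)
    intro i j hij
    have hval := congrArg Subtype.val hij
    exact e.symm.injective (Subtype.ext hval)
  have hrows' : LinearIndependent K fun i : Fin k => (N.submatrix r id) i := by
    have hh : (fun i : Fin k => (N.submatrix r id) i) = fun i => ((e.symm i : Fin k → K)) := by
      funext i
      ext j
      rw [← hr i]
      rfl
    rw [hh]
    exact hrows
  have := Matrix.linearIndependent_rows_iff_isUnit.mp hrows'
  exact ((Matrix.isUnit_iff_isUnit_det _).mp this).ne_zero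

/-- If the rank is at least `k`, some `k × k` submatrix has a nonzero determinant. -/
lemma exists_det_submatrix_ne_zero_of_le_rank {k : ℕ} (M : Matrix ι n K) (h : k ≤ M.rank) :
    ∃ (r : Fin k → ι) (c : Fin k → n), (M.submatrix r c).det ≠ 0 := by
  classical
  haveI : Module.Finite K ↥(span K (Set.range Mᵀ)) := by
    change Module.Finite K ↥(span K (Set.range M.col))
    rw [← Matrix.range_mulVecLin]
    infer_instance
  rw [Matrix.rank_eq_finrank_span_cols] at h
  obtain ⟨t, hts, hspan, hli⟩ := exists_linearIndependent K (Set.range Mᵀ)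
  -- find `k` distinct elements of `t`
  have hg : ∃ g : Fin k → t, Function.Injective g := by
    rcases Set.finite_or_infinite t with ht | ht
    · haveI := ht.fintype
      have hcard : k ≤ t.toFinset.card := by
        have h1 := finrank_span_set_eq_card hli
        rw [hspan] at h1
        change k ≤ finrank K ↥(span K (Set.range Mᵀ)) at h
        omega
      obtain ⟨s, hs, hsc⟩ := Finset.exists_subset_card_eq hcard
      have e := s.equivFinOfCardEq hsc
      refine ⟨fun i => ⟨((e.symm i : ι → K)), Set.mem_toFinset.mp (hs (e.symm i).2)⟩,
        fun i j hij => ?_⟩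
      have hval := congrArg Subtype.val hij
      exact e.symm.injective (Subtype.ext hval)
    · haveI := ht.to_subtype
      exact ⟨fun i => Infinite.natEmbedding t (i : ℕ), fun i j hij =>
        Fin.val_injective ((Infinite.natEmbedding t).injective hij)⟩
  obtain ⟨g, hginj⟩ := hg
  have hv : LinearIndependent K fun i : Fin k => ((g i : ι → K)) := hli.comp g hginj
  have hmem : ∀ i : Fin k, (g i : ι → K) ∈ Set.range Mᵀ := fun i => hts (g i).2
  choose c hc using hmem
  have hvc : LinearIndependent K fun i : Fin k => Mᵀ (c i) := by
    have hh : (fun i : Fin k => Mᵀ (c i)) = fun i => (g i : ι → K) := funext fun i => hc i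
    rw [hh]; exact hv
  have hinj : Function.Injective (M.submatrix id c).mulVec := by
    rw [Matrix.mulVec_injective_iff]
    have hh : (fun j : Fin k => (M.submatrix id c)ᵀ j) = fun j => Mᵀ (c j) := by
      funext j; ext i; simp
    change LinearIndependent K (fun j : Fin k => (M.submatrix id c)ᵀ j)
    rw [hh]
    exact hvc
  obtain ⟨r, hr⟩ := exists_rows_det_ne_zero (M.submatrix id c) hinj
  refine ⟨r, c, ?_⟩
  rwa [Matrix.submatrix_submatrix, Function.comp_id, Function.id_comp] at hr


end LinearAlgebraAux

/-- For a group homomorphism `ρ : H → GL_d(Γ(X, O_X))` over a Noetherian scheme `X`, the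
dimension of the space of `H`-invariants of the fiber at `x` is an upper semicontinuous
function of `x`, i.e. all the superlevel sets `{x | r x ≥ m}` are closed. -/
theorem upperSemicontinuous_finrank_fixedVectors
    (X : Scheme) [AlgebraicGeometry.IsNoetherian X]
    (H : Type*) [Group H] (d : ℕ) (hd : 1 ≤ d)
    (ρ : H →* Matrix.GeneralLinearGroup (Fin d) Γ(X, ⊤)) :
    ∀ m : ℕ, IsClosed {x : X | m ≤ Module.finrank (X.residueField x)
      (fixedVectors fun h : H =>
        (ρ h : Matrix (Fin d) (Fin d) Γ(X, ⊤)).map (X.Γevaluation x))} := by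
  classical
  intro m
  -- the "universal" matrix of all equations `ρ(h) v = v`
  set G : Matrix (H × Fin d) (Fin d) Γ(X, ⊤) :=
    fun p j => ((ρ p.1 : Matrix (Fin d) (Fin d) Γ(X, ⊤)) - 1) p.2 j with hG
  -- the fixed space at `x` is the kernel of `G` mapped to the residue field at `x`
  have h1 : ∀ x : X,
      (fixedVectors fun h : H =>
        (ρ h : Matrix (Fin d) (Fin d) Γ(X, ⊤)).map (X.Γevaluation x)) =
      LinearMap.ker (G.map (X.Γevaluation x)).mulVecLin := by
    intro x
    have hmv : ∀ (v : Fin d → X.residueField x) (h : H) (i : Fin d),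
        ((G.map (X.Γevaluation x)).mulVec v) (h, i) =
          (((ρ h : Matrix (Fin d) (Fin d) Γ(X, ⊤)).map (X.Γevaluation x)).mulVec v) i - v i := by
      intro v h i
      have hrow : (G.map (X.Γevaluation x)) (h, i) =
          ((ρ h : Matrix (Fin d) (Fin d) Γ(X, ⊤)).map (X.Γevaluation x) - 1) i := by
        funext j
        simp only [hG, Matrix.map_apply, Matrix.sub_apply, Matrix.one_apply, map_sub, Pi.sub_apply]
        simp only [Matrix.map, Matrix.of_apply, map_sub]
        split_ifs with hij <;> simp
      have hdp : ((G.map (X.Γevaluation x)).mulVec v) (h, i) =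
          ((((ρ h : Matrix (Fin d) (Fin d) Γ(X, ⊤)).map (X.Γevaluation x)) - 1).mulVec v) i := by
        show dotProduct ((G.map (X.Γevaluation x)) (h, i)) v = _
        rw [hrow]
        rfl
      rw [hdp, Matrix.sub_mulVec, Matrix.one_mulVec]
      rfl
    apply Submodule.ext
    intro v
    constructor
    · intro hv
      rw [LinearMap.mem_ker]
      funext p
      rw [Matrix.mulVecLin_apply, hmv v p.1 p.2, hv p.1]
      simp
    · intro hv h
      have hv' : ∀ p : H × Fin d, ((G.map (X.Γevaluation x)).mulVec v) p = 0 := by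
        intro p
        rw [LinearMap.mem_ker] at hv
        rw [← Matrix.mulVecLin_apply, hv]
        rfl
      funext i
      have := hv' (h, i)
      rw [hmv v h i, sub_eq_zero] at this
      exact this
  -- rank-nullity at each point
  have h2 : ∀ x : X,
      Module.finrank (X.residueField x)
        (fixedVectors fun h : H =>
          (ρ h : Matrix (Fin d) (Fin d) Γ(X, ⊤)).map (X.Γevaluation x))
        + (G.map (X.Γevaluation x)).rank = d := by
    intro x
    rw [h1 x]
    have := LinearMap.finrank_range_add_finrank_ker (G.map (X.Γevaluation x)).mulVecLin
    rw [Module.finrank_fin_fun] at this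
    rw [Matrix.rank]
    omega
  by_cases hmd : m ≤ d
  · rw [← isOpen_compl_iff]
    have hset : {x : X | m ≤ Module.finrank (X.residueField x)
        (fixedVectors fun h : H =>
          (ρ h : Matrix (Fin d) (Fin d) Γ(X, ⊤)).map (X.Γevaluation x))}ᶜ =
        ⋃ (r : Fin (d - m + 1) → H × Fin d) (c : Fin (d - m + 1) → Fin d),
          (X.basicOpen ((G.submatrix r c).det) : Set X) := by
      ext x
      simp only [Set.mem_compl_iff, Set.mem_setOf_eq, not_le, Set.mem_iUnion]
      have hsub : ∀ (r : Fin (d - m + 1) → H × Fin d) (c : Fin (d - m + 1) → Fin d),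
          ((G.map (X.Γevaluation x)).submatrix r c).det = X.Γevaluation x ((G.submatrix r c).det) := by
        intro r c
        rw [Matrix.submatrix_map]
        exact (RingHom.map_det (X.Γevaluation x).hom (G.submatrix r c)).symm
      constructor
      · intro hx
        have hrank : d - m + 1 ≤ (G.map (X.Γevaluation x)).rank := by
          have := h2 x
          omega
        obtain ⟨r, c, hdet⟩ := exists_det_submatrix_ne_zero_of_le_rank _ hrank
        refine ⟨r, c, ?_⟩
        rw [hsub r c] at hdet
        exact (X.evaluation_ne_zero_iff_mem_basicOpen (U := ⊤) x (TopologicalSpace.Opens.mem_top x) _).mp hdet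
      · rintro ⟨r, c, hx⟩
        have hdet : ((G.map (X.Γevaluation x)).submatrix r c).det ≠ 0 := by
          rw [hsub r c]
          exact (X.evaluation_ne_zero_iff_mem_basicOpen (U := ⊤) x (TopologicalSpace.Opens.mem_top x) _).mpr hx
        have hrank := le_rank_of_det_submatrix_ne_zero _ r c hdet
        have := h2 x
        omega
    rw [hset]
    exact isOpen_iUnion fun r => isOpen_iUnion fun c => (X.basicOpen _).isOpen
  · have hempty : {x : X | m ≤ Module.finrank (X.residueField x)
        (fixedVectors fun h : H =>
          (ρ h : Matrix (Fin d) (Fin d) Γ(X, ⊤)).map (X.Γevaluation x))} = ∅ := by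
      ext x
      simp only [Set.mem_setOf_eq, Set.mem_empty_iff_false, iff_false, not_le]
      have := h2 x
      omega
    rw [hempty]
    exact isClosed_empty
end

section
/- Let X be a scheme, H a group, d ≥ 1, and let ρ : H → GL_d(Γ(X, O_X)) be a group homomorphism into the invertible d×d matrices over the ring of global sections of X. For each point x ∈ X, let ρ_x : H → GL_d(κ(x)) be the homomorphism obtained by applying the canonical ring homomorphism Γ(X, O_X) → κ(x) to the residue field of x entrywise, and set r(x) = dim_{κ(x)} { v ∈ κ(x)^d : ρ_x(h)·v = v for all h ∈ H }. If x, y ∈ X and y lies in the closure of {x} (i.e. x specializes to y), then r(x) ≤ r(y). -/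
open AlgebraicGeometry CategoryTheory

section RankLemmas

open Module

variable {K : Type*} [Field K] {m n : Type*} [Fintype m] [Fintype n]

/-- From a matrix of rank `p` one can select `p` linearly independent rows. -/
lemma exists_rows_linIndep (A : Matrix m n K) {p : ℕ} (hp : A.rank = p) :
    ∃ r : Fin p → m, LinearIndependent K (fun i => A (r i)) := by
  classical
  obtain ⟨t, hts, hspan, hli⟩ := exists_linearIndependent K (Set.range A)
  have htfin : t.Finite := (Set.finite_range A).subset hts
  haveI : Fintype t := htfin.fintype
  have hcard : Fintype.card t = p := by
    rw [← hp, Matrix.rank_eq_finrank_span_row]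
    change Fintype.card t = finrank K (Submodule.span K (Set.range A))
    rw [← hspan]
    rw [finrank_span_set_eq_card hli]
    simp
  obtain e := Fintype.equivFinOfCardEq hcard
  have hsel : ∀ i : Fin p, ∃ j : m, A j = (e.symm i : n → K) := fun i => hts (e.symm i).2
  choose r hr using hsel
  refine ⟨r, ?_⟩
  have heq : (fun i => A (r i)) = fun i => ((e.symm i : t) : n → K) := funext fun i => hr i
  rw [heq]
  exact hli.comp e.symm e.symm.injective

/-- From a matrix of rank `p` one can select a `p × p` submatrix with invertible
determinant. -/
lemma exists_isUnit_det_submatrix (A : Matrix m n K) {p : ℕ} (hp : A.rank = p) :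
    ∃ (r : Fin p → m) (c : Fin p → n), IsUnit (A.submatrix r c).det := by
  classical
  obtain ⟨r, hr⟩ := exists_rows_linIndep A hp
  have hr' : LinearIndependent K (fun i => (A.submatrix r id) i) := hr
  have hrank' : (A.submatrix r id).transpose.rank = p := by
    rw [Matrix.rank_transpose]
    exact hr'.rank_matrix.trans (Fintype.card_fin p)
  obtain ⟨c, hc⟩ := exists_rows_linIndep (A.submatrix r id).transpose hrank'
  refine ⟨r, c, ?_⟩
  have hc' : LinearIndependent K (fun i => (A.submatrix r c).transpose i) := hc
  exact (Matrix.isUnit_iff_isUnit_det _).1 (Matrix.linearIndependent_cols_iff_isUnit.1 hc')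

/-- A matrix having a `p × p` submatrix with invertible determinant has rank at least `p`. -/
lemma le_rank_of_isUnit_det_submatrix (A : Matrix m n K) {p : ℕ} (r : Fin p → m)
    (c : Fin p → n) (h : IsUnit (A.submatrix r c).det) : p ≤ A.rank := by
  classical
  have hrows : LinearIndependent K (fun i => A.submatrix r c i) :=
    Matrix.linearIndependent_rows_iff_isUnit.2 ((Matrix.isUnit_iff_isUnit_det _).2 h)
  have hli : LinearIndependent K (fun i => A (r i)) := by
    apply LinearIndependent.of_comp (LinearMap.funLeft K K c)
    exact hrows
  have h1 : p = Set.finrank K (Set.range (fun i => A (r i))) := by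
    rw [← linearIndependent_iff_card_eq_finrank_span.mp hli, Fintype.card_fin]
  rw [Matrix.rank_eq_finrank_span_row, h1]
  exact Submodule.finrank_mono (Submodule.span_mono (Set.range_comp_subset_range r A))

/-- Semicontinuity of rank: if nonvanishing of `g a` implies nonvanishing of `f a`, then the
rank of `B` specialized via `g` is at most the rank specialized via `f`. -/
lemma rank_map_le_rank_map {R L : Type*} [CommRing R] [Field L]
    (f : R →+* K) (g : R →+* L) (hfg : ∀ a, g a ≠ 0 → f a ≠ 0)
    (B : Matrix m n R) : (B.map g).rank ≤ (B.map f).rank := by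
  classical
  obtain ⟨r, c, hdet⟩ := exists_isUnit_det_submatrix (B.map g) rfl
  apply le_rank_of_isUnit_det_submatrix (B.map f) r c
  rw [isUnit_iff_ne_zero]
  have h1 : g (B.submatrix r c).det ≠ 0 := by
    rw [RingHom.map_det]
    exact hdet.ne_zero
  have h2 := hfg _ h1
  rw [RingHom.map_det] at h2
  exact h2

end RankLemmas

section FixedLemmas

open Module

lemma fixedVectors_eq_iInf {K : Type*} [Field K] {d : ℕ} {H : Type*}
    (M : H → Matrix (Fin d) (Fin d) K) :
    fixedVectors M = ⨅ h : H, LinearMap.ker ((M h) - 1).mulVecLin := by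
  ext v
  simp only [Submodule.mem_iInf, LinearMap.mem_ker, Matrix.mulVecLin_apply,
    Matrix.sub_mulVec, Matrix.one_mulVec, sub_eq_zero]
  rfl

lemma exists_finset_iInf {ι R V : Type*} [Ring R] [AddCommGroup V] [Module R V]
    [IsArtinian R V] (p : ι → Submodule R V) :
    ∃ S : Finset ι, ⨅ i, p i = ⨅ i ∈ S, p i := by
  classical
  obtain ⟨N, ⟨S, rfl⟩, hmin⟩ := IsArtinian.set_has_minimal
    {N : Submodule R V | ∃ S : Finset ι, N = ⨅ i ∈ S, p i} ⟨⊤, ∅, by simp⟩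
  refine ⟨S, le_antisymm (le_iInf₂ fun i _ => iInf_le p i) (le_iInf fun j => ?_)⟩
  by_contra hj
  have h1 : (⨅ i ∈ insert j S, p i) < ⨅ i ∈ S, p i := by
    refine lt_of_le_of_ne (biInf_mono (S.subset_insert j)) fun he => hj ?_
    rw [← he]
    exact iInf₂_le j (S.mem_insert_self j)
  exact hmin _ ⟨insert j S, rfl⟩ h1

/-- Key lemma: comparison of dimensions of fixed spaces under two specializations. -/
lemma finrank_fixedVectors_le {R K L : Type*} [CommRing R] [Field K] [Field L]
    (f : R →+* K) (g : R →+* L) (hfg : ∀ a, g a ≠ 0 → f a ≠ 0)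
    {d : ℕ} {H : Type*} (M : H → Matrix (Fin d) (Fin d) R) :
    finrank K (fixedVectors fun h => (M h).map f) ≤
      finrank L (fixedVectors fun h => (M h).map g) := by
  classical
  obtain ⟨Sf, hSf⟩ := exists_finset_iInf
    (fun h : H => LinearMap.ker ((M h).map f - 1).mulVecLin)
  obtain ⟨Sg, hSg⟩ := exists_finset_iInf
    (fun h : H => LinearMap.ker ((M h).map g - 1).mulVecLin)
  set S : Finset H := Sf ∪ Sg with hS
  have hSf' : (⨅ h : H, LinearMap.ker ((M h).map f - 1).mulVecLin)
      = ⨅ h ∈ S, LinearMap.ker ((M h).map f - 1).mulVecLin := by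
    refine le_antisymm (le_iInf₂ fun i _ => iInf_le _ i) ?_
    rw [hSf]
    exact biInf_mono Finset.subset_union_left
  have hSg' : (⨅ h : H, LinearMap.ker ((M h).map g - 1).mulVecLin)
      = ⨅ h ∈ S, LinearMap.ker ((M h).map g - 1).mulVecLin := by
    refine le_antisymm (le_iInf₂ fun i _ => iInf_le _ i) ?_
    rw [hSg]
    exact biInf_mono Finset.subset_union_right
  set B : Matrix (↥S × Fin d) (Fin d) R := fun q j => (M q.1.1 - 1) q.2 j with hB
  have hmapf : B.map f = fun q j => ((M q.1.1).map f - 1) q.2 j := by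
    ext q j
    rw [Matrix.map_apply]
    simp [hB, Matrix.map_apply, Matrix.sub_apply, Matrix.one_apply, apply_ite f]
  have hmapg : B.map g = fun q j => ((M q.1.1).map g - 1) q.2 j := by
    ext q j
    rw [Matrix.map_apply]
    simp [hB, Matrix.map_apply, Matrix.sub_apply, Matrix.one_apply, apply_ite g]
  have hkerf : LinearMap.ker (B.map f).mulVecLin
        = ⨅ h ∈ S, LinearMap.ker ((M h).map f - 1).mulVecLin := by
    ext v
    rw [hmapf]
    simp only [LinearMap.mem_ker, Matrix.mulVecLin_apply, Submodule.mem_iInf]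
    constructor
    · intro hv h hh
      funext i
      exact congrFun hv (⟨h, hh⟩, i)
    · intro hv
      funext q
      exact congrFun (hv q.1.1 q.1.2) q.2
  have hkerg : LinearMap.ker (B.map g).mulVecLin
        = ⨅ h ∈ S, LinearMap.ker ((M h).map g - 1).mulVecLin := by
    ext v
    rw [hmapg]
    simp only [LinearMap.mem_ker, Matrix.mulVecLin_apply, Submodule.mem_iInf]
    constructor
    · intro hv h hh
      funext i
      exact congrFun hv (⟨h, hh⟩, i)
    · intro hv
      funext q
      exact congrFun (hv q.1.1 q.1.2) q.2
  have hrkf := LinearMap.finrank_range_add_finrank_ker (B.map f).mulVecLin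
  have hrkg := LinearMap.finrank_range_add_finrank_ker (B.map g).mulVecLin
  rw [finrank_pi] at hrkf hrkg
  have hrank : (B.map g).rank ≤ (B.map f).rank := rank_map_le_rank_map f g hfg B
  have hfixf : finrank K (fixedVectors fun h => (M h).map f)
      = finrank K (LinearMap.ker (B.map f).mulVecLin) := by
    rw [fixedVectors_eq_iInf, hSf', ← hkerf]
  have hfixg : finrank L (fixedVectors fun h => (M h).map g)
      = finrank L (LinearMap.ker (B.map g).mulVecLin) := by
    rw [fixedVectors_eq_iInf, hSg', ← hkerg]
  rw [hfixf, hfixg]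
  have e1 : (B.map f).rank + finrank K (LinearMap.ker (B.map f).mulVecLin)
      = Fintype.card (Fin d) := hrkf
  have e2 : (B.map g).rank + finrank L (LinearMap.ker (B.map g).mulVecLin)
      = Fintype.card (Fin d) := hrkg
  omega

end FixedLemmas

/-- For a group homomorphism `ρ : H → GL_d(Γ(X, O_X))` over a scheme `X`, the dimension of the
space of `H`-invariants of the fiber can only grow under specialization: if `y` lies in the
closure of `{x}` then `r x ≤ r y`. -/
theorem finrank_fixedVectors_le_of_specializes
    (X : Scheme) (H : Type*) [Group H] (d : ℕ) (hd : 1 ≤ d)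
    (ρ : H →* Matrix.GeneralLinearGroup (Fin d) Γ(X, ⊤))
    (x y : X) (hxy : y ∈ closure ({x} : Set X)) :
    Module.finrank (X.residueField x)
      (fixedVectors fun h : H =>
        (ρ h : Matrix (Fin d) (Fin d) Γ(X, ⊤)).map (X.Γevaluation x)) ≤
    Module.finrank (X.residueField y)
      (fixedVectors fun h : H =>
        (ρ h : Matrix (Fin d) (Fin d) Γ(X, ⊤)).map (X.Γevaluation y)) := by
  refine finrank_fixedVectors_le (X.Γevaluation x).hom (X.Γevaluation y).hom ?_
    (fun h => (ρ h : Matrix (Fin d) (Fin d) Γ(X, ⊤)))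
  intro a ha
  have hy : y ∈ X.basicOpen a :=
    (X.evaluation_ne_zero_iff_mem_basicOpen y (show y ∈ (⊤ : X.Opens) from trivial) a).1 ha
  have hx : x ∈ X.basicOpen a := by
    have := (mem_closure_iff.1 hxy) (X.basicOpen a) (X.basicOpen a).2 hy
    obtain ⟨z, hz1, hz2⟩ := this
    rwa [Set.mem_singleton_iff.1 hz2] at hz1
  exact (X.evaluation_ne_zero_iff_mem_basicOpen x (show x ∈ (⊤ : X.Opens) from trivial) a).2 hx
end

section
/- Let X be a Noetherian scheme, H a group, d ≥ 1, and let ρ : H → GL_d(Γ(X, O_X)) be a group homomorphism into the invertible d×d matrices over the ring of global sections of X. For each point x ∈ X, let ρ_x : H → GL_d(κ(x)) be the homomorphism obtained by applying the canonical ring homomorphism Γ(X, O_X) → κ(x) to the residue field of x entrywise, and set r(x) = dim_{κ(x)} { v ∈ κ(x)^d : ρ_x(h)·v = v for all h ∈ H }. Then for every integer m ≥ 0, the set A = { x ∈ X : r(x) ≥ m } is a constructible subset of X. -/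
open AlgebraicGeometry CategoryTheory

open Module Submodule Set Matrix

section Helpers

variable {K V : Type*} [Field K] [AddCommGroup V] [Module K V]

/-- If the span of the range of `S` has finrank at least `n`, one can pick `n` of the `S i`
which are linearly independent. -/
lemma exists_li_subfamily [FiniteDimensional K V] {ι : Type*} (S : ι → V) (n : ℕ)
    (h : n ≤ finrank K (span K (Set.range S))) :
    ∃ r : Fin n → ι, LinearIndependent K (S ∘ r) := by
  classical
  obtain ⟨b, hbsub, hbspan, hbli⟩ := exists_linearIndependent K (Set.range S)
  have hbfin : b.Finite := hbli.setFinite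
  haveI := hbfin.fintype
  have hcard : finrank K (span K (Set.range S)) = Fintype.card b := by
    rw [← hbspan, finrank_span_set_eq_card (R := K) hbli, Set.toFinset_card]
  have : n ≤ Fintype.card b := hcard ▸ h
  obtain ⟨f⟩ : Nonempty (Fin n ↪ b) := by
    apply Function.Embedding.nonempty_of_card_le
    simpa using this
  have hmem : ∀ a : Fin n, (f a : V) ∈ Set.range S := fun a => hbsub (f a).2
  choose r hr using fun a => hmem a
  refine ⟨r, ?_⟩
  have : S ∘ r = fun a => ((f a : b) : V) := by
    funext a; exact hr a
  rw [this]
  exact hbli.comp f f.injective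

/-- `finrank` of a span is at most `k` iff every `k+1` of the generators are dependent. -/
lemma finrank_span_range_le_iff [FiniteDimensional K V] {ι : Type*} (S : ι → V) (k : ℕ) :
    finrank K (span K (Set.range S)) ≤ k ↔
      ∀ r : Fin (k + 1) → ι, ¬ LinearIndependent K (S ∘ r) := by
  constructor
  · intro h r hli
    have h1 : Fintype.card (Fin (k + 1)) = (Set.range (S ∘ r)).finrank K :=
      linearIndependent_iff_card_eq_finrank_span.mp hli
    have h2 : (Set.range (S ∘ r)).finrank K ≤ finrank K (span K (Set.range S)) := by
      apply Submodule.finrank_mono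
      apply Submodule.span_mono
      rintro _ ⟨a, rfl⟩
      exact ⟨r a, rfl⟩
    simp only [Fintype.card_fin] at h1
    omega
  · intro h
    by_contra hk
    push_neg at hk
    obtain ⟨r, hli⟩ := exists_li_subfamily S (k + 1) hk
    exact h r hli

/-- The rows of a rectangular matrix over a field are linearly independent iff some maximal
square submatrix has nonzero determinant. -/
lemma linearIndependent_rows_iff_exists_det_ne_zero {n d : ℕ}
    (M : Matrix (Fin n) (Fin d) K) :
    LinearIndependent K (fun i => M i) ↔
      ∃ c : Fin n → Fin d, (M.submatrix id c).det ≠ 0 := by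
  constructor
  · intro h
    have hrank : M.rank = n := by
      rw [h.rank_matrix, Fintype.card_fin]
    have hle : n ≤ finrank K (span K (Set.range Mᵀ)) := by
      rw [show Set.range Mᵀ = Set.range M.col from rfl, ← Matrix.rank_eq_finrank_span_cols, hrank]
    obtain ⟨c, hc⟩ := exists_li_subfamily Mᵀ n hle
    refine ⟨c, ?_⟩
    have : LinearIndependent K (fun i => (M.submatrix id c)ᵀ i) := by
      convert hc using 1
      · funext i; rfl
      · rfl
    have hu : IsUnit (M.submatrix id c) := Matrix.linearIndependent_cols_iff_isUnit.mp this
    intro hdet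
    rw [Matrix.isUnit_iff_isUnit_det, hdet, isUnit_zero_iff] at hu
    exact one_ne_zero hu.symm
  · rintro ⟨c, hc⟩
    have hu : IsUnit (M.submatrix id c) := by
      rw [Matrix.isUnit_iff_isUnit_det]
      exact hc.isUnit
    have h := Matrix.linearIndependent_rows_iff_isUnit.mpr hu
    have : (fun i => (M.submatrix id c) i) = (LinearMap.funLeft K K c) ∘ (fun i => M i) := by
      funext i; rfl
    change LinearIndependent K (fun i => (M.submatrix id c) i) at h
    rw [this] at h
    exact h.of_comp _

end Helpers


/-- A subset of a topological space is constructible if it is a finite union of sets of the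
form `U ∩ Z` with `U` open and `Z` closed. -/
def IsConstructibleSet {Y : Type*} [TopologicalSpace Y] (s : Set Y) : Prop :=
  ∃ (n : ℕ) (U Z : Fin n → Set Y),
    (∀ i, IsOpen (U i)) ∧ (∀ i, IsClosed (Z i)) ∧ s = ⋃ i, U i ∩ Z i

lemma IsClosed.isConstructibleSet {Y : Type*} [TopologicalSpace Y] {s : Set Y}
    (h : IsClosed s) : IsConstructibleSet s :=
  ⟨1, fun _ => Set.univ, fun _ => s, fun _ => isOpen_univ, fun _ => h, by simp [Set.iUnion_const]⟩

/-- For a group homomorphism `ρ : H → GL_d(Γ(X, O_X))` over a Noetherian scheme `X` and any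
`m : ℕ`, the superlevel set `{x | r x ≥ m}` of the dimension `r x` of the space of
`H`-invariants of the fiber at `x` is constructible. -/
theorem isConstructibleSet_finrank_fixedVectors_ge
    (X : Scheme) [AlgebraicGeometry.IsNoetherian X]
    (H : Type*) [Group H] (d : ℕ) (hd : 1 ≤ d)
    (ρ : H →* Matrix.GeneralLinearGroup (Fin d) Γ(X, ⊤)) (m : ℕ) :
    IsConstructibleSet {x : X | m ≤ Module.finrank (X.residueField x)
      (fixedVectors fun h : H =>
        (ρ h : Matrix (Fin d) (Fin d) Γ(X, ⊤)).map (X.Γevaluation x))} := by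
  classical
  set N : H → Matrix (Fin d) (Fin d) Γ(X, ⊤) :=
    fun h => (ρ h : Matrix (Fin d) (Fin d) Γ(X, ⊤)) - 1 with hN
  apply IsClosed.isConstructibleSet
  by_cases hm : d < m
  · have hempty : {x : X | m ≤ Module.finrank (X.residueField x)
        (fixedVectors fun h : H =>
          (ρ h : Matrix (Fin d) (Fin d) Γ(X, ⊤)).map (X.Γevaluation x))} = ∅ := by
      ext x
      simp only [Set.mem_setOf_eq, Set.mem_empty_iff_false, iff_false, not_le]
      have h1 : Module.finrank (X.residueField x)
          (fixedVectors fun h : H =>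
            (ρ h : Matrix (Fin d) (Fin d) Γ(X, ⊤)).map (X.Γevaluation x)) ≤ d := by
        have := Submodule.finrank_le (R := X.residueField x)
          (fixedVectors fun h : H =>
            (ρ h : Matrix (Fin d) (Fin d) Γ(X, ⊤)).map (X.Γevaluation x))
        rwa [Module.finrank_pi, Fintype.card_fin] at this
      omega
    rw [hempty]
    exact isClosed_empty
  push_neg at hm
  have key : ∀ x : X, (m ≤ Module.finrank (X.residueField x)
      (fixedVectors fun h : H =>
        (ρ h : Matrix (Fin d) (Fin d) Γ(X, ⊤)).map (X.Γevaluation x))) ↔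
      ∀ (r : Fin (d - m + 1) → H × Fin d) (c : Fin (d - m + 1) → Fin d),
        X.Γevaluation x (Matrix.det (Matrix.of fun a b => N (r a).1 (r a).2 (c b))) = 0 := by
    intro x
    set κ := X.residueField x
    set φ := X.Γevaluation x with hφ
    set S : H × Fin d → (Fin d → κ) := fun p j => φ (N p.1 p.2 j) with hS
    set B : LinearMap.BilinForm κ (Fin d → κ) :=
      Matrix.toBilin' (1 : Matrix (Fin d) (Fin d) κ) with hB
    have hBapp : ∀ v w, B v w = v ⬝ᵥ w := by
      intro v w; rw [hB, Matrix.toBilin'_apply', Matrix.one_mulVec]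
    have hBrefl : B.IsRefl := fun v w h => by
      rw [hBapp] at h ⊢; rwa [dotProduct_comm]
    have hBnd : B.Nondegenerate := by
      rw [hB]
      exact LinearMap.BilinForm.nondegenerate_toBilin'_iff_det_ne_zero.mpr (by simp)
    have hNmap : ∀ h : H, (N h).map φ = ((ρ h : Matrix (Fin d) (Fin d) Γ(X, ⊤)).map φ) - 1 := by
      intro h
      ext i j
      simp [hN, Matrix.map_apply, Matrix.one_apply, apply_ite φ, map_sub]
    have hfix : (fixedVectors fun h : H =>
        ((ρ h : Matrix (Fin d) (Fin d) Γ(X, ⊤)).map φ)) =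
        B.orthogonal (Submodule.span κ (Set.range S)) := by
      ext v
      have hmem : v ∈ (fixedVectors fun h : H =>
          ((ρ h : Matrix (Fin d) (Fin d) Γ(X, ⊤)).map φ)) ↔
          ∀ h : H, ((ρ h : Matrix (Fin d) (Fin d) Γ(X, ⊤)).map φ) *ᵥ v = v := Iff.rfl
      rw [hmem, LinearMap.BilinForm.mem_orthogonal_iff]
      have hgen : (∀ w ∈ Submodule.span κ (Set.range S), B.IsOrtho w v) ↔
          ∀ p, S p ⬝ᵥ v = 0 := by
        constructor
        · intro hw p
          have := hw _ (Submodule.subset_span ⟨p, rfl⟩)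
          rwa [LinearMap.BilinForm.IsOrtho, hBapp] at this
        · intro hp w hw
          have hle : Submodule.span κ (Set.range S) ≤ LinearMap.ker (B.flip v) := by
            rw [Submodule.span_le]
            rintro _ ⟨p, rfl⟩
            simpa [LinearMap.mem_ker, LinearMap.flip_apply, hBapp] using hp p
          have := hle hw
          simpa [LinearMap.mem_ker, LinearMap.flip_apply, LinearMap.BilinForm.IsOrtho] using this
      rw [show (∀ n ∈ Submodule.span κ (Set.range S), B n v = 0) ↔ _ from hgen]
      constructor
      · intro hfx p
        have h0 : ((N p.1).map φ) *ᵥ v = 0 := by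
          rw [hNmap, Matrix.sub_mulVec, Matrix.one_mulVec, hfx p.1, sub_self]
        have := congrFun h0 p.2
        simpa [Matrix.mulVec, dotProduct, hS, Matrix.map_apply] using this
      · intro hs h
        have h0 : ((N h).map φ) *ᵥ v = 0 := by
          funext i
          simpa [Matrix.mulVec, dotProduct, hS, Matrix.map_apply] using hs (h, i)
        rw [hNmap, Matrix.sub_mulVec, Matrix.one_mulVec, sub_eq_zero] at h0
        exact h0
    have hfr : Module.finrank κ (fixedVectors fun h : H =>
        ((ρ h : Matrix (Fin d) (Fin d) Γ(X, ⊤)).map φ)) =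
        d - Module.finrank κ (Submodule.span κ (Set.range S)) := by
      rw [hfix, LinearMap.BilinForm.finrank_orthogonal hBnd, Module.finrank_pi,
        Fintype.card_fin]
    have hWle : Module.finrank κ (Submodule.span κ (Set.range S)) ≤ d := by
      have := Submodule.finrank_le (Submodule.span κ (Set.range S))
      rwa [Module.finrank_pi, Fintype.card_fin] at this
    rw [hfr, show (m ≤ d - Module.finrank κ (Submodule.span κ (Set.range S))) ↔
        Module.finrank κ (Submodule.span κ (Set.range S)) ≤ d - m from by omega,
      finrank_span_range_le_iff]
    have hdet : ∀ (r : Fin (d - m + 1) → H × Fin d) (c : Fin (d - m + 1) → Fin d),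
        ((Matrix.of fun a b => S (r a) b).submatrix id c).det
          = φ (Matrix.det (Matrix.of fun a b => N (r a).1 (r a).2 (c b))) := by
      intro r c
      rw [RingHom.map_det]
      congr 1
    constructor
    · intro hLI r c
      by_contra hne
      apply hLI r
      have hex : ∃ c, ((Matrix.of fun a b => S (r a) b).submatrix id c).det ≠ 0 :=
        ⟨c, by rw [hdet r c]; exact hne⟩
      exact (linearIndependent_rows_iff_exists_det_ne_zero _).mpr hex
    · intro h0 r hLI
      obtain ⟨c, hc⟩ := (linearIndependent_rows_iff_exists_det_ne_zero
        (Matrix.of fun a b => S (r a) b)).mp hLI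
      rw [hdet r c] at hc
      exact hc (h0 r c)

  have hset : {x : X | m ≤ Module.finrank (X.residueField x)
      (fixedVectors fun h : H =>
        (ρ h : Matrix (Fin d) (Fin d) Γ(X, ⊤)).map (X.Γevaluation x))} =
      ⋂ (r : Fin (d - m + 1) → H × Fin d) (c : Fin (d - m + 1) → Fin d),
        (↑(X.basicOpen (Matrix.det (Matrix.of fun a b => N (r a).1 (r a).2 (c b)))) : Set X)ᶜ := by
    ext x
    simp only [Set.mem_setOf_eq, Set.mem_iInter, Set.mem_compl_iff, SetLike.mem_coe]
    rw [key x]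
    refine forall_congr' fun r => forall_congr' fun c => ?_
    rw [← Scheme.evaluation_eq_zero_iff_notMem_basicOpen (hx := Set.mem_univ x)]
  rw [hset]
  exact isClosed_iInter fun r => isClosed_iInter fun c =>
    (X.basicOpen _).isOpen.isClosed_compl
end
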